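/- Suppose Ω is partitioned into pairwise disjoint sets P_L, N_L and U with P_L ∪ N_L ∪ U = Ω. Let P_U ⊆ U be nonempty with |P_U| = m and P_L ∪ P_U ≠ Ω, let r ∈ {1, …, |Ω|}, and let T be a real number with T ≤ TPR(P_U, r). Let F = {S ⊆ U : |S| = m and TPR(S, r) ≤ T}, and suppose P*_U ∈ F attains the maximum of TPR(·, r) over F. Then for every S ∈ F, FPR(P_L ∪ S, r) ≥ FPR(P_L ∪ P*_U, r) ≥ FPR(P_L ∪ P_U, r); that is, FPR(P_L ∪ P*_U, r) is the least upper bound on FPR(P_L ∪ P_U, r) achievable by surrogate positive sets in F. -/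

import Mathlib

open Finset

variable {α : Type*} [Fintype α] [DecidableEq α]

/-- `top S r`: the elements of `S` ranked in the top `r` positions.
Ranks are 1-based: the rank of `x` is `(rk x : ℕ) + 1`, so `rank x ≤ r ↔ (rk x : ℕ) < r`. -/
def topSet (rk : α ≃ Fin (Fintype.card α)) (S : Finset α) (r : ℕ) : Finset α :=
  S.filter fun x => ((rk x : Fin (Fintype.card α)) : ℕ) < r

/-- True positive rate of the positive set `S` at cutoff rank `r`. -/
noncomputable def TPR (rk : α ≃ Fin (Fintype.card α)) (S : Finset α) (r : ℕ) : ℝ :=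
  (topSet rk S r).card / S.card

/-- False positive rate of the positive set `S` at cutoff rank `r`:
the TPR of the complement `Ω \ S`. -/
noncomputable def FPR (rk : α ≃ Fin (Fintype.card α)) (S : Finset α) (r : ℕ) : ℝ :=
  TPR rk Sᶜ r

lemma topSet_univ_card (rk : α ≃ Fin (Fintype.card α)) {r : ℕ} (hr : r ≤ Fintype.card α) :
    (topSet rk (univ : Finset α) r).card = r := by
  classical
  have hinj : Function.Injective (fun i : Fin r => rk.symm (Fin.castLE hr i)) := by
        intro a b hab
        have := rk.symm.injective hab
        exact Fin.castLE_injective hr this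
  have h1 : topSet rk (univ : Finset α) r
      = (univ : Finset (Fin r)).map ⟨fun i => rk.symm (Fin.castLE hr i), hinj⟩ := by
    ext x
    simp only [topSet, mem_filter, mem_univ, true_and, mem_map, Function.Embedding.coeFn_mk]
    constructor
    · intro hx
      exact ⟨⟨(rk x : ℕ), hx⟩, by simp [Fin.ext_iff]⟩
    · rintro ⟨i, rfl⟩
      simp [Fin.ext_iff]
  rw [h1, card_map, card_univ, Fintype.card_fin]

lemma topSet_compl_card (rk : α ≃ Fin (Fintype.card α)) (A : Finset α) {r : ℕ}
    (hr : r ≤ Fintype.card α) :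
    (topSet rk Aᶜ r).card + (topSet rk A r).card = r := by
  classical
  have hdisj : Disjoint (topSet rk Aᶜ r) (topSet rk A r) :=
    (disjoint_compl_left).mono (filter_subset _ _) (filter_subset _ _)
  have hunion : topSet rk Aᶜ r ∪ topSet rk A r = topSet rk (univ : Finset α) r := by
    have hu : Aᶜ ∪ A = (univ : Finset α) := by
      ext x
      simp only [mem_union, mem_compl, mem_univ, iff_true]
      exact (em (x ∈ A)).symm
    rw [topSet, topSet, topSet, ← filter_union, hu]
  rw [← card_union_of_disjoint hdisj, hunion, topSet_univ_card rk hr]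

lemma fpr_formula (rk : α ≃ Fin (Fintype.card α)) (A : Finset α) {r : ℕ}
    (hr : r ≤ Fintype.card α) :
    FPR rk A r = ((r : ℝ) - (topSet rk A r).card) / ((Fintype.card α : ℝ) - A.card) := by
  unfold FPR TPR
  have h1 := topSet_compl_card rk A hr
  have hnum : ((topSet rk Aᶜ r).card : ℝ) = (r : ℝ) - (topSet rk A r).card := by
    have : ((topSet rk Aᶜ r).card : ℝ) + (topSet rk A r).card = r := by exact_mod_cast h1
    linarith
  have hden : ((Aᶜ.card : ℕ) : ℝ) = (Fintype.card α : ℝ) - A.card := by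
    rw [card_compl]
    have := card_le_univ A
    push_cast [Nat.cast_sub this]
    simp
  rw [hnum, hden]

theorem stmt_9 (rk : α ≃ Fin (Fintype.card α)) (PL NL U : Finset α)
    (hPN : Disjoint PL NL) (hPU : Disjoint PL U) (hNU : Disjoint NL U)
    (hcover : PL ∪ NL ∪ U = Finset.univ)
    (PU : Finset α) (hPUsub : PU ⊆ U) (hPUne : PU.Nonempty)
    (m : ℕ) (hPUcard : PU.card = m) (hproper : PL ∪ PU ≠ Finset.univ)
    (r : ℕ) (hr1 : 1 ≤ r) (hr2 : r ≤ Fintype.card α)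
    (T : ℝ) (hT : T ≤ TPR rk PU r)
    (Pstar : Finset α) (hstarsub : Pstar ⊆ U) (hstarcard : Pstar.card = m)
    (hstarT : TPR rk Pstar r ≤ T)
    (hmax : ∀ S : Finset α, S ⊆ U → S.card = m → TPR rk S r ≤ T →
      TPR rk S r ≤ TPR rk Pstar r) :
    ∀ S : Finset α, S ⊆ U → S.card = m → TPR rk S r ≤ T →
      FPR rk (PL ∪ S) r ≥ FPR rk (PL ∪ Pstar) r ∧
        FPR rk (PL ∪ Pstar) r ≥ FPR rk (PL ∪ PU) r := by
  classical
  have hm : 0 < m := hPUcard ▸ card_pos.mpr hPUne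
  -- card of PL ∪ S' for S' ⊆ U of card m
  have hcardPLS : ∀ S' : Finset α, S' ⊆ U → S'.card = m →
      (PL ∪ S').card = PL.card + m := by
    intro S' h hc
    rw [card_union_of_disjoint (hPU.mono_right h), hc]
  have hlt : PL.card + m < Fintype.card α := by
    have h1 : PL ∪ PU ⊂ univ := (ssubset_univ_iff).mpr hproper
    have h2 := card_lt_card h1
    rwa [card_univ, hcardPLS PU hPUsub hPUcard] at h2
  -- TPR comparison yields topSet card comparison
  have tpr_le : ∀ S1 S2 : Finset α, S1.card = m → S2.card = m →
      TPR rk S1 r ≤ TPR rk S2 r →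
      (topSet rk S1 r).card ≤ (topSet rk S2 r).card := by
    intro S1 S2 hc1 hc2 h
    unfold TPR at h
    rw [hc1, hc2] at h
    have hm' : (0 : ℝ) < m := by exact_mod_cast hm
    have := (div_le_div_iff_of_pos_right hm').mp h
    exact_mod_cast this
  -- FPR is antitone in topSet card
  have key : ∀ S1 S2 : Finset α, S1 ⊆ U → S2 ⊆ U → S1.card = m → S2.card = m →
      (topSet rk S1 r).card ≤ (topSet rk S2 r).card →
      FPR rk (PL ∪ S2) r ≤ FPR rk (PL ∪ S1) r := by
    intro S1 S2 h1 h2 hc1 hc2 ht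
    rw [fpr_formula rk _ hr2, fpr_formula rk _ hr2, hcardPLS _ h1 hc1, hcardPLS _ h2 hc2]
    have hD : (0 : ℝ) < (Fintype.card α : ℝ) - (PL.card + m : ℕ) := by
      have : ((PL.card + m : ℕ) : ℝ) < (Fintype.card α : ℝ) := by exact_mod_cast hlt
      linarith
    have e1 : (topSet rk (PL ∪ S1) r).card
        = (topSet rk PL r).card + (topSet rk S1 r).card := by
      rw [topSet, filter_union,
        card_union_of_disjoint (((hPU.mono_right h1)).mono (filter_subset _ _) (filter_subset _ _))]
      rfl
    have e2 : (topSet rk (PL ∪ S2) r).card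
        = (topSet rk PL r).card + (topSet rk S2 r).card := by
      rw [topSet, filter_union,
        card_union_of_disjoint (((hPU.mono_right h2)).mono (filter_subset _ _) (filter_subset _ _))]
      rfl
    rw [e1, e2, div_le_div_iff_of_pos_right hD]
    have ht' : ((topSet rk S1 r).card : ℝ) ≤ (topSet rk S2 r).card := by exact_mod_cast ht
    push_cast
    linarith
  intro S hS hScard hST
  constructor
  · exact key S Pstar hS hstarsub hScard hstarcard
      (tpr_le S Pstar hScard hstarcard (hmax S hS hScard hST))
  · exact key Pstar PU hstarsub hPUsub hstarcard hPUcard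
      (tpr_le Pstar PU hstarcard hPUcard (hstarT.trans hT))
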